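/- Let q ∈ (0,1), let M₁, M₋₁ be as above, and for a sign pattern s ∈ {±1}^{2l} let δ_s = -1 + tr(∏_{i=1}^{l} M_{s_{2i} s_{2i+1}}). Then δ_s = (-1)^{∑_{i=1}^{l} (1 - s_{2i}s_{2i+1})/2} · (2q-1)^l. -/

import Mathlib

/-- `M₁`. -/
noncomputable def M1 (q : ℝ) : Matrix (Fin 2) (Fin 2) ℝ :=
  (1 / q) • !![q ^ 2, (1 - q) ^ 2; q ^ 2, q ^ 2]

/-- `M₋₁`. -/
noncomputable def Mneg1 (q : ℝ) : Matrix (Fin 2) (Fin 2) ℝ :=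
  (1 / (1 - q)) • !![(1 - q) ^ 2, (1 - q) ^ 2; q ^ 2, (1 - q) ^ 2]

/-- For a sign pattern `s = (s₂,…,s_{2l+1}) ∈ {±1}^{2l}` (indexed here by `Fin (2l)`),
the product `s_{2i} s_{2i+1}` of the `i`-th consecutive pair. -/
def pairProd (l : ℕ) (s : Fin (2 * l) → ℤ) (i : Fin l) : ℤ :=
  s ⟨2 * i, by have := i.isLt; omega⟩ * s ⟨2 * i + 1, by have := i.isLt; omega⟩

/-- The conjugating matrix with first row the common left eigenvector `(q, 1-q)`. -/
noncomputable def Tm (q : ℝ) : Matrix (Fin 2) (Fin 2) ℝ := !![q, 1 - q; 0, 1]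

lemma Tm_mul_M1 (q : ℝ) (h0 : q ≠ 0) :
    Tm q * M1 q = !![1, 0; 1, 2 * q - 1] * Tm q := by
  ext i j
  fin_cases i <;> fin_cases j <;>
    simp [Tm, M1, Matrix.mul_apply, Fin.sum_univ_two] <;> field_simp <;> ring

lemma Tm_mul_Mneg1 (q : ℝ) (h1 : 1 - q ≠ 0) :
    Tm q * Mneg1 q = !![1, 0; q / (1 - q), 1 - 2 * q] * Tm q := by
  ext i j
  fin_cases i <;> fin_cases j <;>
    simp [Tm, Mneg1, Matrix.mul_apply, Fin.sum_univ_two] <;> field_simp <;> ring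

lemma key (q : ℝ) (h0 : q ≠ 0) (h1 : 1 - q ≠ 0) (bs : List Bool) :
    ∃ c : ℝ, Tm q * (bs.map (fun b => if b then M1 q else Mneg1 q)).prod
      = !![1, 0; c, (bs.map (fun b => if b then 2 * q - 1 else 1 - 2 * q)).prod] * Tm q := by
  induction bs with
  | nil =>
      exact ⟨0, by simp [← Matrix.one_fin_two]⟩
  | cons b bs ih =>
      obtain ⟨c, hc⟩ := ih
      cases b
      · refine ⟨q / (1 - q) + (1 - 2 * q) * c, ?_⟩
        simp only [List.map_cons, List.prod_cons, Bool.false_eq_true, if_false]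
        rw [← mul_assoc, Tm_mul_Mneg1 q h1, mul_assoc, hc, ← mul_assoc]
        congr 1
        ext i j
        fin_cases i <;> fin_cases j <;>
          simp [Matrix.mul_apply, Fin.sum_univ_two] <;> ring
      · refine ⟨1 + (2 * q - 1) * c, ?_⟩
        simp only [List.map_cons, List.prod_cons, if_true]
        rw [← mul_assoc, Tm_mul_M1 q h0, mul_assoc, hc, ← mul_assoc]
        congr 1
        ext i j
        fin_cases i <;> fin_cases j <;>
          simp [Matrix.mul_apply, Fin.sum_univ_two] <;> ring

lemma trace_key (q : ℝ) (h0 : q ≠ 0) (h1 : 1 - q ≠ 0) (bs : List Bool) :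
    Matrix.trace (bs.map (fun b => if b then M1 q else Mneg1 q)).prod
      = 1 + (bs.map (fun b => if b then 2 * q - 1 else 1 - 2 * q)).prod := by
  obtain ⟨c, hc⟩ := key q h0 h1 bs
  have hdet : IsUnit (Tm q).det := by
    simp [Tm, Matrix.det_fin_two_of]
    exact h0
  set P := (bs.map (fun b => if b then M1 q else Mneg1 q)).prod
  set d := (bs.map (fun b => if b then 2 * q - 1 else 1 - 2 * q)).prod
  have hP : P = (Tm q)⁻¹ * (!![1, 0; c, d] * Tm q) := by
    rw [← hc, Matrix.nonsing_inv_mul_cancel_left _ _ hdet]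
  rw [hP, Matrix.trace_mul_comm, mul_assoc, Matrix.mul_nonsing_inv _ hdet, mul_one,
    Matrix.trace_fin_two_of]

lemma neg_one_zpow_sum {ι : Type*} (t : Finset ι) (f : ι → ℤ) :
    (-1 : ℝ) ^ (∑ i ∈ t, f i) = ∏ i ∈ t, (-1 : ℝ) ^ (f i) := by
  classical
  induction t using Finset.induction with
  | empty => simp
  | insert _ _ h ih =>
      rw [Finset.sum_insert h, Finset.prod_insert h, zpow_add₀ (by norm_num : (-1:ℝ) ≠ 0), ih]

/-- `δ_s = -1 + tr ∏_{i=1}^l M_{s_{2i}s_{2i+1}} = (-1)^{∑_i (1-s_{2i}s_{2i+1})/2} (2q-1)^l`. -/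
theorem delta_formula (q : ℝ) (hq : q ∈ Set.Ioo (0 : ℝ) 1) (l : ℕ) (hl : 1 ≤ l)
    (s : Fin (2 * l) → ℤ) (hs : ∀ i, s i = 1 ∨ s i = -1) :
    -1 + Matrix.trace
        ((List.ofFn fun i : Fin l =>
          if pairProd l s i = 1 then M1 q else Mneg1 q).prod)
      = (-1 : ℝ) ^ (∑ i : Fin l, (1 - pairProd l s i) / 2) * (2 * q - 1) ^ l := by
  obtain ⟨hq0, hq1⟩ := hq
  have h0 : q ≠ 0 := ne_of_gt hq0
  have h1 : 1 - q ≠ 0 := by linarith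
  have hp : ∀ i, pairProd l s i = 1 ∨ pairProd l s i = -1 := by
    intro i
    unfold pairProd
    rcases hs ⟨2 * i, by have := i.isLt; omega⟩ with ha | ha <;>
      rcases hs ⟨2 * i + 1, by have := i.isLt; omega⟩ with hb | hb <;>
      rw [ha, hb] <;> norm_num
  have hlist : (List.ofFn fun i : Fin l =>
        if pairProd l s i = 1 then M1 q else Mneg1 q)
      = ((List.ofFn fun i : Fin l => decide (pairProd l s i = 1)).map
          (fun b => if b then M1 q else Mneg1 q)) := by
    rw [List.map_ofFn]
    congr 1
    funext i
    by_cases h : pairProd l s i = 1 <;> simp [h]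
  rw [hlist, trace_key q h0 h1, List.map_ofFn]
  have hprod : (List.ofFn ((fun b => if b then 2 * q - 1 else 1 - 2 * q) ∘
        fun i : Fin l => decide (pairProd l s i = 1))).prod
      = ∏ i : Fin l, (if pairProd l s i = 1 then 2 * q - 1 else 1 - 2 * q) := by
    rw [List.prod_ofFn]
    apply Finset.prod_congr rfl
    intro i _
    by_cases h : pairProd l s i = 1 <;> simp [h]
  rw [hprod, neg_one_zpow_sum]
  rw [show (2 * q - 1 : ℝ) ^ l = ∏ _i : Fin l, (2 * q - 1) by
    simp [Finset.prod_const]]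
  rw [← Finset.prod_mul_distrib]
  have heach : ∀ i : Fin l,
      (if pairProd l s i = 1 then 2 * q - 1 else 1 - 2 * q)
        = (-1 : ℝ) ^ ((1 - pairProd l s i) / 2) * (2 * q - 1) := by
    intro i
    rcases hp i with h | h <;> rw [h] <;> norm_num
  rw [Finset.prod_congr rfl (fun i _ => heach i)]
  ring
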